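/- Let A be a commutative ring (integral domain) and A, B nonzero polynomials in A[X] with deg(A) + deg(B) ≥ 1. Then there exist polynomials U, V ∈ A[X] with deg(U) < deg(B) and deg(V) < deg(A) such that A·U + B·V = Res(A, B), where Res(A, B) is the resultant of A and B. -/

import Mathlib

open Polynomial

/-- The Sylvester matrix of two polynomials `f` and `g`: its first `deg g` columns
contain the shifted coefficients of `f` and its last `deg f` columns the shifted
coefficients of `g`. -/
noncomputable def sylvesterMatrix {R : Type*} [CommRing R] (f g : Polynomial R) :
    Matrix (Fin (g.natDegree + f.natDegree)) (Fin (g.natDegree + f.natDegree)) R :=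
  fun i j =>
    if (j : ℕ) < g.natDegree then
      if (j : ℕ) ≤ (i : ℕ) ∧ (i : ℕ) ≤ (j : ℕ) + f.natDegree then
        f.coeff (f.natDegree + j - i)
      else 0
    else
      if (j : ℕ) - g.natDegree ≤ (i : ℕ) ∧ (i : ℕ) ≤ (j : ℕ) - g.natDegree + g.natDegree then
        g.coeff (g.natDegree + ((j : ℕ) - g.natDegree) - i)
      else 0

/-- The resultant of `f` and `g`: the determinant of their Sylvester matrix. -/
noncomputable def resultant {R : Type*} [CommRing R] (f g : Polynomial R) : R :=
  (sylvesterMatrix f g).det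

theorem syl_entry {R : Type*} [CommRing R] (A B : Polynomial R)
    (i j : Fin (B.natDegree + A.natDegree)) :
    sylvesterMatrix A B i j =
      (if (j : ℕ) < B.natDegree then A * X ^ (B.natDegree - 1 - (j : ℕ))
        else B * X ^ (B.natDegree + A.natDegree - 1 - (j : ℕ))).coeff
        (B.natDegree + A.natDegree - 1 - (i : ℕ)) := by
  have hi := i.isLt
  have hj := j.isLt
  show (if (j : ℕ) < B.natDegree then
      if (j : ℕ) ≤ (i : ℕ) ∧ (i : ℕ) ≤ (j : ℕ) + A.natDegree then
        A.coeff (A.natDegree + (j:ℕ) - (i:ℕ)) else 0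
    else
      if (j : ℕ) - B.natDegree ≤ (i : ℕ) ∧ (i : ℕ) ≤ (j : ℕ) - B.natDegree + B.natDegree then
        B.coeff (B.natDegree + ((j : ℕ) - B.natDegree) - (i:ℕ)) else 0) = _
  by_cases h : (j : ℕ) < B.natDegree
  · rw [if_pos h, if_pos h, coeff_mul_X_pow']
    by_cases h2 : (j : ℕ) ≤ (i : ℕ) ∧ (i : ℕ) ≤ (j : ℕ) + A.natDegree
    · have hle : B.natDegree - 1 - (j:ℕ) ≤ B.natDegree + A.natDegree - 1 - (i:ℕ) := by omega
      rw [if_pos h2, if_pos hle]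
      congr 1
      omega
    · rw [if_neg h2]
      by_cases hle : B.natDegree - 1 - (j:ℕ) ≤ B.natDegree + A.natDegree - 1 - (i:ℕ)
      · rw [if_pos hle]
        refine (coeff_eq_zero_of_natDegree_lt ?_).symm
        omega
      · rw [if_neg hle]
  · rw [if_neg h, if_neg h, coeff_mul_X_pow']
    by_cases h2 : (j : ℕ) - B.natDegree ≤ (i : ℕ) ∧ (i : ℕ) ≤ (j : ℕ) - B.natDegree + B.natDegree
    · have hle : B.natDegree + A.natDegree - 1 - (j:ℕ) ≤ B.natDegree + A.natDegree - 1 - (i:ℕ) := by omega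
      rw [if_pos h2, if_pos hle]
      congr 1
      omega
    · rw [if_neg h2]
      by_cases hle : B.natDegree + A.natDegree - 1 - (j:ℕ) ≤ B.natDegree + A.natDegree - 1 - (i:ℕ)
      · rw [if_pos hle]
        refine (coeff_eq_zero_of_natDegree_lt ?_).symm
        omega
      · rw [if_neg hle]

/-- over an integral domain, for nonzero `A, B` with
`deg A + deg B ≥ 1`, there are `U, V` with `deg U < deg B`, `deg V < deg A` and
`A·U + B·V = Res(A,B)`. -/
theorem resultant_bezout {R : Type*} [CommRing R] [IsDomain R]
    (A B : Polynomial R) (hA : A ≠ 0) (hB : B ≠ 0)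
    (hdeg : 1 ≤ A.natDegree + B.natDegree) :
    ∃ U V : Polynomial R, U.degree < B.degree ∧ V.degree < A.degree ∧
      A * U + B * V = C (_root_.resultant A B) := by
  set n := B.natDegree with hn
  set m := A.natDegree with hm
  have hN : 0 < n + m := by omega
  set M := sylvesterMatrix A B with hM
  set e : Fin (n + m) → R := Pi.single ⟨n + m - 1, by omega⟩ 1 with he
  set w : Fin (n + m) → R := M.adjugate.mulVec e with hw
  have hMw : M.mulVec w = _root_.resultant A B • e := by
    rw [hw, Matrix.mulVec_mulVec, Matrix.mul_adjugate, Matrix.smul_mulVec,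
      Matrix.one_mulVec]
    rfl
  set U : Polynomial R := ∑ j : Fin (n + m),
    if (j : ℕ) < n then w j • X ^ (n - 1 - (j : ℕ)) else 0 with hU
  set V : Polynomial R := ∑ j : Fin (n + m),
    if (j : ℕ) < n then 0 else w j • X ^ (n + m - 1 - (j : ℕ)) with hV
  have key : A * U + B * V = ∑ j : Fin (n + m),
      w j • (if (j : ℕ) < n then A * X ^ (n - 1 - (j : ℕ))
        else B * X ^ (n + m - 1 - (j : ℕ))) := by
    rw [hU, hV, Finset.mul_sum, Finset.mul_sum, ← Finset.sum_add_distrib]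
    refine Finset.sum_congr rfl fun j _ => ?_
    by_cases h : (j : ℕ) < n
    · simp [h, Algebra.mul_smul_comm]
    · simp [h, Algebra.mul_smul_comm]
  have hcoeff : ∀ k : ℕ, (A * U + B * V).coeff k = (C (_root_.resultant A B)).coeff k := by
    intro k
    rw [key, finset_sum_coeff, coeff_C]
    by_cases hk : k < n + m
    · have hik : (⟨n + m - 1 - k, by omega⟩ : Fin (n + m)) = ⟨n + m - 1 - k, by omega⟩ := rfl
      have := congrFun hMw ⟨n + m - 1 - k, by omega⟩
      rw [Matrix.mulVec, dotProduct] at this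
      calc ∑ j : Fin (n + m), (w j • (if (j : ℕ) < n then A * X ^ (n - 1 - (j : ℕ))
              else B * X ^ (n + m - 1 - (j : ℕ)))).coeff k
          = ∑ j : Fin (n + m), M ⟨n + m - 1 - k, by omega⟩ j * w j := by
            refine Finset.sum_congr rfl fun j _ => ?_
            rw [coeff_smul, smul_eq_mul, mul_comm, hM, syl_entry]
            simp only [← hn, ← hm]
            congr 2
            omega
        _ = (_root_.resultant A B • e) ⟨n + m - 1 - k, by omega⟩ := this
        _ = if k = 0 then _root_.resultant A B else 0 := by
            rw [Pi.smul_apply, he]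
            by_cases h0 : k = 0
            · rw [if_pos h0, Pi.single_apply, if_pos (by simp; omega), smul_eq_mul, mul_one]
            · rw [if_neg h0, Pi.single_apply, if_neg (by simp; omega),
                smul_eq_mul, mul_zero]
    · have h0 : ¬ k = 0 := by omega
      rw [if_neg h0]
      refine Finset.sum_eq_zero fun j _ => ?_
      rw [coeff_smul]
      have : (if (j : ℕ) < n then A * X ^ (n - 1 - (j : ℕ))
          else B * X ^ (n + m - 1 - (j : ℕ))).coeff k = 0 := by
        have hj := j.isLt
        refine coeff_eq_zero_of_natDegree_lt ?_
        by_cases h : (j : ℕ) < n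
        · rw [if_pos h]
          calc (A * X ^ (n - 1 - (j : ℕ))).natDegree
              ≤ A.natDegree + (X ^ (n - 1 - (j : ℕ))).natDegree := natDegree_mul_le
            _ < k := by rw [natDegree_X_pow]; omega
        · rw [if_neg h]
          calc (B * X ^ (n + m - 1 - (j : ℕ))).natDegree
              ≤ B.natDegree + (X ^ (n + m - 1 - (j : ℕ))).natDegree := natDegree_mul_le
            _ < k := by rw [natDegree_X_pow]; omega
      rw [this, smul_zero]
  refine ⟨U, V, ?_, ?_, ?_⟩
  · rw [degree_eq_natDegree hB, ← hn]
    refine degree_lt_iff_coeff_zero U n |>.mpr fun k hk => ?_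
    rw [hU, finset_sum_coeff]
    refine Finset.sum_eq_zero fun j _ => ?_
    by_cases h : (j : ℕ) < n
    · rw [if_pos h, coeff_smul, coeff_X_pow, if_neg (by exact_mod_cast by omega : ¬ k = n - 1 - (j:ℕ)), smul_zero]
    · rw [if_neg h, coeff_zero]
  · rw [degree_eq_natDegree hA, ← hm]
    refine degree_lt_iff_coeff_zero V m |>.mpr fun k hk => ?_
    rw [hV, finset_sum_coeff]
    refine Finset.sum_eq_zero fun j _ => ?_
    by_cases h : (j : ℕ) < n
    · rw [if_pos h, coeff_zero]
    · have hj := j.isLt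
      rw [if_neg h, coeff_smul, coeff_X_pow,
        if_neg (by exact_mod_cast by omega : ¬ k = n + m - 1 - (j:ℕ)), smul_zero]
  · exact Polynomial.ext hcoeff
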